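/- Let P be a finite p-group and χ an irreducible complex character of P with χ(1) ≤ pⁿ. Then the (n+1)-st term P⁽ⁿ⁺¹⁾ of the derived series of P is contained in the kernel of χ. -/

import Mathlib

open CategoryTheory

open Module

section helpers

variable {P : Type} [Group P] {V : Type} [AddCommGroup V] [Module ℂ V]

lemma rho_comm_kills_commutator (ρ : Representation ℂ P V)
    (hc : ∀ g h : P, Commute (ρ g) (ρ h)) :
    ∀ g ∈ derivedSeries P 1, ρ g = 1 := by
  intro g hg
  rw [derivedSeries_one] at hg
  have key : commutator P ≤ ρ.ker := by
    rw [commutator_def]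
    rw [Subgroup.commutator_le]
    intro x _ y _
    rw [MonoidHom.mem_ker, commutatorElement_def]
    rw [map_mul, map_mul, map_mul]
    rw [mul_assoc (ρ x), (hc y x⁻¹).eq, ← mul_assoc (ρ x)]
    rw [← map_mul, mul_inv_cancel, map_one, one_mul, ← map_mul, mul_inv_cancel, map_one]
  exact key hg

/-- Monotone transfer of derived series to a subgroup containing the commutator. -/
lemma derivedSeries_le_map_subgroup {K : Subgroup P} (hK : derivedSeries P 1 ≤ K) :
    ∀ j, derivedSeries P (j + 1) ≤ (derivedSeries K j).map K.subtype := by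
  intro j
  induction j with
  | zero =>
    rw [derivedSeries_zero, ← MonoidHom.range_eq_map, Subgroup.range_subtype]
    exact hK
  | succ j ih =>
    calc derivedSeries P (j + 2) = ⁅derivedSeries P (j+1), derivedSeries P (j+1)⁆ := by
          rw [derivedSeries_succ]
      _ ≤ ⁅(derivedSeries K j).map K.subtype, (derivedSeries K j).map K.subtype⁆ :=
          Subgroup.commutator_mono ih ih
      _ = (⁅derivedSeries K j, derivedSeries K j⁆).map K.subtype :=
          (Subgroup.map_commutator _ _ _).symm
      _ = (derivedSeries K (j+1)).map K.subtype := by rw [derivedSeries_succ]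

lemma finrank_sum_le [FiniteDimensional ℂ V] {ι : Type} [DecidableEq ι] (f : ι → Submodule ℂ V)
    (hind : iSupIndep f) (s : Finset ι) :
    ∑ i ∈ s, finrank ℂ (f i) ≤ finrank ℂ V := by
  have key : ∀ s : Finset ι, ∑ i ∈ s, finrank ℂ (f i) = finrank ℂ (s.sup f : Submodule ℂ V) := by
    intro s
    induction s using Finset.induction_on with
    | empty => rw [Finset.sum_empty, Finset.sup_empty, finrank_bot]
    | @insert a s ha ih =>
      rw [Finset.sum_insert ha, Finset.sup_insert, ih]
      have hdisj : Disjoint (f a) (s.sup f) := by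
        refine (hind a).mono_right ?_
        refine Finset.sup_le fun b hb => ?_
        exact le_iSup₂ (f := fun b (_ : b ≠ a) => f b) b (by rintro rfl; exact ha hb)
      have := Submodule.finrank_sup_add_finrank_inf_eq (f a) (s.sup f)
      rw [hdisj.eq_bot] at this
      simp only [finrank_bot, add_zero] at this
      omega
  rw [key s]
  exact Submodule.finrank_le _

lemma exists_prime_power_root {p : ℕ} (z : ℂ) :
    ∀ m : ℕ, z ^ (p ^ m) = 1 → z ≠ 1 →
      ∃ w : ℂ, (∃ x : ℕ, w = z ^ x) ∧ w ^ p = 1 ∧ w ≠ 1 := by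
  intro m
  induction m with
  | zero => intro h1 hne; rw [pow_zero, pow_one] at h1; exact absurd h1 hne
  | succ m ih =>
    intro h1 hne
    by_cases h : z ^ (p ^ m) = 1
    · exact ih h hne
    · refine ⟨z ^ (p ^ m), ⟨p ^ m, rfl⟩, ?_, h⟩
      rw [← pow_mul, ← pow_succ]
      exact h1

end helpers

section main

variable {p : ℕ} [hp : Fact p.Prime]

lemma main_induction (k : ℕ) :
    ∀ (P : Type) [Group P] [Finite P], IsPGroup p P →
    ∀ (V : Type) [AddCommGroup V] [Module ℂ V] [FiniteDimensional ℂ V] [Nontrivial V]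
      (ρ : Representation ℂ P V),
      (∀ W : Submodule ℂ V, (∀ g : P, W.map (ρ g) ≤ W) → W = ⊥ ∨ W = ⊤) →
      finrank ℂ V ≤ p ^ k →
      ∀ g ∈ derivedSeries P (k + 1), ρ g = 1 := by
  induction k with
  | zero =>
    intro P _ _ hP V _ _ _ _ ρ hirr hdim g hg
    have h1 : finrank ℂ V = 1 := le_antisymm (by simpa using hdim) finrank_pos
    obtain ⟨v, hv0, hv⟩ := finrank_eq_one_iff'.mp h1
    have hscal : ∀ f : Module.End ℂ V, ∃ c : ℂ, f = c • 1 := by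
      intro f
      obtain ⟨c, hc⟩ := hv (f v)
      refine ⟨c, ?_⟩
      ext w
      obtain ⟨a, ha⟩ := hv w
      rw [← ha, map_smul, ← hc]
      simp [smul_smul, mul_comm]
    refine rho_comm_kills_commutator ρ (fun g h => ?_) g hg
    obtain ⟨c, hc⟩ := hscal (ρ g)
    obtain ⟨d, hd⟩ := hscal (ρ h)
    rw [hc, hd]
    show _ = _
    rw [smul_mul_assoc, mul_smul_comm, one_mul, smul_mul_assoc, mul_smul_comm, one_mul,
      smul_smul, smul_smul, mul_comm c d]
  | succ k IH =>
    intro P _ _ hP V _ _ _ _ ρ hirr hdim g hg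
    by_cases hsmall : finrank ℂ V ≤ p ^ k
    · have hsub : derivedSeries P (k + 2) ≤ derivedSeries P (k + 1) := by
        rw [derivedSeries_succ P (k+1), Subgroup.commutator_le]
        intro x hx y hy
        exact mul_mem (mul_mem (mul_mem hx hy) (inv_mem hx)) (inv_mem hy)
      exact IH P hP V ρ hirr hsmall g (hsub hg)
    -- Now `p ^ k < finrank V ≤ p ^ (k+1)`.
    push_neg at hsmall
    have hdim2 : 2 ≤ finrank ℂ V := by
      have h1 : 1 ≤ p ^ k := Nat.one_le_pow _ _ hp.out.pos
      omega
    classical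
    -- the subgroup of elements acting by scalars
    have smul_smul_end : ∀ (c d : ℂ),
        ((c • 1 : Module.End ℂ V) * (d • 1)) = (c * d) • 1 := by
      intro c d
      rw [smul_mul_assoc, mul_smul_comm, one_mul, smul_smul]
    have one_ne_zero_end : (1 : Module.End ℂ V) ≠ 0 := by
      intro h
      obtain ⟨v, hv⟩ := exists_ne (0 : V)
      exact hv (by simpa using LinearMap.congr_fun h v)
    let S : Subgroup P :=
      { carrier := {g : P | ∃ c : ℂ, ρ g = c • 1}
        one_mem' := ⟨1, by simp⟩
        mul_mem' := by
          rintro a b ⟨c, hc⟩ ⟨d, hd⟩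
          exact ⟨c * d, by rw [map_mul, hc, hd, smul_smul_end]⟩
        inv_mem' := by
          rintro a ⟨c, hc⟩
          have hmul : ρ a * ρ a⁻¹ = 1 := by rw [← map_mul, mul_inv_cancel, map_one]
          have hc0 : c ≠ 0 := by
            rintro rfl
            rw [hc, zero_smul, zero_mul] at hmul
            exact one_ne_zero_end hmul.symm
          refine ⟨c⁻¹, ?_⟩
          have : (c • 1 : Module.End ℂ V) * ρ a⁻¹ = 1 := by rw [← hc, hmul]
          rw [smul_mul_assoc, one_mul] at this
          rw [← this, smul_smul, inv_mul_cancel₀ hc0, one_smul] }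
    have hSmem : ∀ {a : P}, a ∈ S ↔ ∃ c : ℂ, ρ a = c • 1 := fun {a} => Iff.rfl
    haveI hSnormal : S.Normal := by
      constructor
      rintro a ⟨c, hc⟩ g
      refine ⟨c, ?_⟩
      rw [map_mul, map_mul, hc, mul_smul_comm, smul_mul_assoc, mul_one, ← map_mul,
        mul_inv_cancel, map_one]
    have hS : S ≠ ⊤ := by
      intro hStop
      obtain ⟨v, hv⟩ := exists_ne (0 : V)
      have hinv : ∀ g : P, (ℂ ∙ v).map (ρ g) ≤ ℂ ∙ v := by
        intro g
        rintro _ ⟨x, hx, rfl⟩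
        obtain ⟨c, hc⟩ : (g : P) ∈ S := hStop ▸ Subgroup.mem_top g
        rw [hc]
        exact Submodule.smul_mem _ _ hx
      rcases hirr _ hinv with h | h
      · exact hv (by
          rw [← Submodule.mem_bot ℂ, ← h]
          exact Submodule.mem_span_singleton_self v)
      · have : finrank ℂ V = 1 := by
          rw [← finrank_top ℂ V, ← h, finrank_span_singleton hv]
        omega
    -- find `b` whose image in `P ⧸ S` is a nontrivial central element
    haveI : Nontrivial (P ⧸ S) := by
      obtain ⟨b₀, hb₀⟩ : ∃ b₀ : P, b₀ ∉ S := by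
        by_contra h
        push_neg at h
        exact hS ((Subgroup.eq_top_iff' S).mpr h)
      exact ⟨⟨(b₀ : P ⧸ S), 1, fun h => hb₀ ((QuotientGroup.eq_one_iff _).mp h)⟩⟩
    haveI := (hP.to_quotient S).center_nontrivial
    obtain ⟨z, hz1⟩ := exists_ne (1 : Subgroup.center (P ⧸ S))
    obtain ⟨b, hb⟩ := QuotientGroup.mk_surjective (z : P ⧸ S)
    have hbS : b ∉ S := by
      intro h
      apply hz1
      apply Subtype.ext
      rw [← hb] at *
      exact (QuotientGroup.eq_one_iff _).mpr h
    have hbcomm : ∀ g : P, g * b * g⁻¹ * b⁻¹ ∈ S := by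
      intro g
      rw [← QuotientGroup.eq_one_iff]
      have hzc := Subgroup.mem_center_iff.mp z.2 ((g : P) : P ⧸ S)
      rw [← hb] at hzc
      show ((g * b * g⁻¹ * b⁻¹ : P) : P ⧸ S) = 1
      simp only [QuotientGroup.mk_mul, QuotientGroup.mk_inv]
      rw [hzc]
      group
    -- the operator `T` and the scalar cocycle `cfun`
    set T : Module.End ℂ V := ρ b with hTdef
    have hT1 : T * ρ b⁻¹ = 1 := by rw [hTdef, ← map_mul, mul_inv_cancel, map_one]
    have hT1' : ρ b⁻¹ * T = 1 := by rw [hTdef, ← map_mul, inv_mul_cancel, map_one]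
    have hTne0 : T ≠ 0 := by
      intro h
      rw [h, zero_mul] at hT1
      exact one_ne_zero_end hT1.symm
    have hTinj : Function.Injective T := by
      intro x y hxy
      have : ∀ w : V, ρ b⁻¹ (T w) = w := fun w => by
        have := LinearMap.congr_fun hT1' w
        simpa using this
      rw [← this x, ← this y, hxy]
    have hexist : ∀ g : P, ∃ c : ℂ, ρ (g * b * g⁻¹) = c • T := by
      intro g
      obtain ⟨c, hc⟩ := hbcomm g
      refine ⟨c, ?_⟩
      have key : ρ (g * b * g⁻¹) = ρ (g * b * g⁻¹ * b⁻¹) * ρ b := by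
        rw [← map_mul]
        congr 1
        group
      rw [key, hc, smul_mul_assoc, one_mul, hTdef]
    have huniq : ∀ {c d : ℂ}, c • T = d • T → c = d := by
      intro c d h
      have : (c - d) • T = 0 := by rw [sub_smul, h, sub_self]
      rcases smul_eq_zero.mp this with h' | h'
      · exact sub_eq_zero.mp h'
      · exact absurd h' hTne0
    choose cfun hcfun using hexist
    have hc1 : cfun 1 = 1 := by
      apply huniq
      rw [one_smul, ← hcfun 1]
      congr 1
      group
    have hcmul : ∀ g h : P, cfun (g * h) = cfun g * cfun h := by
      intro g h
      apply huniq
      calc cfun (g * h) • T = ρ ((g * h) * b * (g * h)⁻¹) := (hcfun _).symm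
        _ = ρ g * ρ (h * b * h⁻¹) * ρ g⁻¹ := by
            rw [← map_mul, ← map_mul]; congr 1; group
        _ = ρ g * (cfun h • T) * ρ g⁻¹ := by rw [hcfun]
        _ = cfun h • (ρ g * ρ (b) * ρ g⁻¹) := by
            rw [mul_smul_comm, smul_mul_assoc, hTdef]
        _ = cfun h • ρ (g * b * g⁻¹) := by rw [← map_mul, ← map_mul]
        _ = cfun h • (cfun g • T) := by rw [hcfun]
        _ = (cfun g * cfun h) • T := by rw [smul_smul, mul_comm]
    have hcinv : ∀ g : P, cfun g * cfun g⁻¹ = 1 := by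
      intro g
      rw [← hcmul, mul_inv_cancel, hc1]
    have hcne0 : ∀ g : P, cfun g ≠ 0 := by
      intro g h
      have := hcinv g
      rw [h, zero_mul] at this
      exact zero_ne_one this
    have hcpow : ∀ (x : P) (n : ℕ), cfun (x ^ n) = (cfun x) ^ n := by
      intro x n
      induction n with
      | zero => rw [pow_zero, pow_zero, hc1]
      | succ n ih => rw [pow_succ, pow_succ, hcmul, ih]
    -- action on eigenspaces
    have hmap : ∀ (g : P) (μ : ℂ),
        (Module.End.eigenspace T μ).map (ρ g) ≤ Module.End.eigenspace T (cfun g⁻¹ * μ) := by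
      intro g μ
      rintro _ ⟨v, hv, rfl⟩
      rw [SetLike.mem_coe, Module.End.mem_eigenspace_iff] at hv
      rw [Module.End.mem_eigenspace_iff]
      have h1 : T * ρ g = ρ g * ρ (g⁻¹ * b * g) := by
        rw [hTdef, ← map_mul, ← map_mul]; congr 1; group
      have h2 : ρ (g⁻¹ * b * g) = cfun g⁻¹ • T := by
        have := hcfun g⁻¹
        rwa [inv_inv] at this
      calc T ((ρ g) v) = (T * ρ g) v := rfl
        _ = (ρ g) ((cfun g⁻¹ • T) v) := by rw [h1, h2]; rfl
        _ = (ρ g) (cfun g⁻¹ • (μ • v)) := by rw [LinearMap.smul_apply, hv]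
        _ = (cfun g⁻¹ * μ) • (ρ g) v := by rw [map_smul, map_smul, smul_smul]
    -- choose an eigenvalue of `T`
    obtain ⟨μ₀, hμ₀⟩ := Module.End.exists_eigenvalue T
    set W : Submodule ℂ V := Module.End.eigenspace T μ₀ with hWdef
    have hWne : W ≠ ⊥ := hμ₀
    have hμ₀ne : μ₀ ≠ 0 := by
      rintro rfl
      obtain ⟨v, hv, hv0⟩ := Submodule.exists_mem_ne_zero_of_ne_bot hWne
      rw [Module.End.mem_eigenspace_iff] at hv
      rw [zero_smul] at hv
      exact hv0 (hTinj (by rw [hv, map_zero]))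
    -- some `g₀` moves the eigenvalues
    have hg0 : ∃ g₀ : P, cfun g₀ ≠ 1 := by
      by_contra hall
      push_neg at hall
      have hinv : ∀ g : P, W.map (ρ g) ≤ W := by
        intro g
        have := hmap g μ₀
        rwa [hall g⁻¹, one_mul] at this
      rcases hirr W hinv with h | h
      · exact hWne h
      · apply hbS
        refine ⟨μ₀, ?_⟩
        ext v
        have hv : v ∈ W := h ▸ Submodule.mem_top
        rw [Module.End.mem_eigenspace_iff] at hv
        simpa using hv
    obtain ⟨g₀, hg₀⟩ := hg0
    obtain ⟨m, hm⟩ := hP g₀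
    have hzm : (cfun g₀) ^ (p ^ m) = 1 := by rw [← hcpow, hm, hc1]
    obtain ⟨ζ, ⟨x, hx⟩, hζp, hζne⟩ := exists_prime_power_root (cfun g₀) m hzm hg₀
    have hζ0 : ζ ≠ 0 := by
      intro h
      rw [h, zero_pow hp.out.ne_zero] at hζp
      exact zero_ne_one hζp
    -- g₁ with cfun (g₁⁻¹ ^ i) = ζ ^ i
    set g₁ : P := (g₀ ^ x)⁻¹ with hg₁def
    have hcg₁ : ∀ i : ℕ, cfun ((g₁ ^ i)⁻¹) = ζ ^ i := by
      intro i
      rw [hg₁def, ← inv_pow, inv_inv, ← pow_mul, hcpow, hx, pow_mul]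
    have horder : orderOf ζ = p := orderOf_eq_prime hζp hζne
    have hζpow_inj : ∀ i j : ℕ, i < p → j < p → ζ ^ i = ζ ^ j → i = j := by
      have key : ∀ i j : ℕ, i ≤ j → j < p → ζ ^ i = ζ ^ j → i = j := by
        intro i j hij hjp h
        have h1 : ζ ^ i * ζ ^ (j - i) = ζ ^ i * 1 := by
          rw [mul_one, ← pow_add]
          rw [h]
          congr 1
          omega
        have h2 : ζ ^ (j - i) = 1 := mul_left_cancel₀ (pow_ne_zero i hζ0) h1
        have h3 : p ∣ (j - i) := horder ▸ orderOf_dvd_of_pow_eq_one h2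
        rcases Nat.eq_zero_of_dvd_of_lt h3 (by omega) with h4
        omega
      intro i j hi hj h
      rcases le_total i j with hle | hle
      · exact key i j hle hj h
      · exact (key j i hle hi h.symm).symm
    -- the family of translated eigenspaces
    set E : Fin p → Submodule ℂ V :=
      fun i => Module.End.eigenspace T (ζ ^ (i : ℕ) * μ₀) with hEdef
    have hEinj : Function.Injective (fun i : Fin p => ζ ^ (i : ℕ) * μ₀) := by
      intro i j h
      simp only at h
      exact Fin.ext (hζpow_inj i j i.2 j.2 (mul_right_cancel₀ hμ₀ne h))
    have hEindep : iSupIndep E :=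
      (Module.End.eigenspaces_iSupIndep T).comp hEinj
    have hrankE : ∀ i : Fin p, finrank ℂ W ≤ finrank ℂ (E i) := by
      intro i
      have hmaps : ∀ w ∈ W, ρ (g₁ ^ (i : ℕ)) w ∈ E i := by
        intro w hw
        have := hmap (g₁ ^ (i : ℕ)) μ₀ (Submodule.mem_map_of_mem hw)
        rwa [hcg₁] at this
      have hinj2 : Function.Injective (ρ (g₁ ^ (i : ℕ))) := by
        intro u v huv
        have hlin : ∀ w : V, ρ ((g₁ ^ (i : ℕ))⁻¹) (ρ (g₁ ^ (i : ℕ)) w) = w := by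
          intro w
          have : ρ ((g₁ ^ (i : ℕ))⁻¹) * ρ (g₁ ^ (i : ℕ)) = 1 := by
            rw [← map_mul, inv_mul_cancel, map_one]
          simpa using LinearMap.congr_fun this w
        rw [← hlin u, ← hlin v, huv]
      have := LinearMap.finrank_le_finrank_of_injective
        (f := (ρ (g₁ ^ (i : ℕ))).restrict (p := W) (q := E i) hmaps) ?_
      · exact this
      · intro u v huv
        exact Subtype.ext (hinj2 (congrArg Subtype.val huv))
    have hWdim : finrank ℂ W ≤ p ^ k := by
      have hsum : p * finrank ℂ W ≤ finrank ℂ V := by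
        calc p * finrank ℂ W = ∑ _i : Fin p, finrank ℂ W := by
              rw [Finset.sum_const, Finset.card_univ, Fintype.card_fin, smul_eq_mul]
          _ ≤ ∑ i : Fin p, finrank ℂ (E i) := Finset.sum_le_sum fun i _ => hrankE i
          _ ≤ finrank ℂ V := finrank_sum_le E hEindep Finset.univ
      have hpk : finrank ℂ V ≤ p * p ^ k := by
        rw [← pow_succ']
        exact hdim
      exact Nat.le_of_mul_le_mul_left (le_trans hsum hpk) hp.out.pos
    -- the stabilizer subgroup `K`
    let K : Subgroup P :=
      { carrier := {g : P | cfun g = 1}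
        one_mem' := hc1
        mul_mem' := by
          intro a b ha hb
          show cfun (a * b) = 1
          rw [hcmul, ha, hb, one_mul]
        inv_mem' := by
          intro a ha
          show cfun a⁻¹ = 1
          have := hcinv a
          rwa [ha, one_mul] at this }
    have hKmem : ∀ {a : P}, a ∈ K ↔ cfun a = 1 := fun {a} => Iff.rfl
    have hWK : ∀ g ∈ K, W.map (ρ g) ≤ W := by
      intro g hgK
      have := hmap g μ₀
      rwa [hKmem.mp (inv_mem hgK), one_mul] at this
    -- the representation of `K` on `W`
    let ρW : Representation ℂ K W :=
      { toFun := fun gk => (ρ gk.1).restrict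
          (fun w hw => hWK gk.1 gk.2 (Submodule.mem_map_of_mem hw))
        map_one' := by
          ext w
          simp [LinearMap.restrict_apply]
        map_mul' := by
          intro a c
          ext w
          simp [LinearMap.restrict_apply] }
    have hρWapply : ∀ (gk : K) (w : W), ((ρW gk) w : V) = ρ gk.1 (w : V) := by
      intro gk w
      rfl
    haveI : Nontrivial W := Submodule.nontrivial_iff_ne_bot.mpr hWne
    -- irreducibility of `W` as a `K`-representation
    have hirrW : ∀ W₀' : Submodule ℂ W, (∀ gk : K, W₀'.map (ρW gk) ≤ W₀') →
        W₀' = ⊥ ∨ W₀' = ⊤ := by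
      intro W₀' hW₀'inv
      set W₀ : Submodule ℂ V := W₀'.map W.subtype with hW₀def
      have hW₀le : W₀ ≤ W := Submodule.map_subtype_le W W₀'
      have hW₀inv : ∀ g ∈ K, W₀.map (ρ g) ≤ W₀ := by
        rintro g hgK _ ⟨x, hx, rfl⟩
        obtain ⟨y, hy, rfl⟩ := hx
        have : ρ g (W.subtype y) = W.subtype (ρW ⟨g, hgK⟩ y) := (hρWapply ⟨g, hgK⟩ y).symm
        rw [this]
        exact Submodule.mem_map_of_mem (hW₀'inv ⟨g, hgK⟩ (Submodule.mem_map_of_mem hy))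
      by_cases hbot : W₀ = ⊥
      · left
        have : Submodule.map W.subtype W₀' = Submodule.map W.subtype (⊥ : Submodule ℂ W) := by
          rw [← hW₀def, hbot, Submodule.map_bot]
        exact Submodule.map_injective_of_injective W.injective_subtype this
      · right
        set Y : Submodule ℂ V := ⨆ ν, ⨆ (_ : ν ≠ μ₀), Module.End.eigenspace T ν with hYdef
        set U : Submodule ℂ V := ⨆ h : P, W₀.map (ρ h) with hUdef
        have hUinv : ∀ h : P, U.map (ρ h) ≤ U := by
          intro h
          rw [hUdef, Submodule.map_iSup]
          apply iSup_le
          intro g'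
          rw [← Submodule.map_comp]
          have : (ρ h).comp (ρ g') = ρ (h * g') := by rw [map_mul]; rfl
          rw [this]
          exact le_iSup (fun h : P => W₀.map (ρ h)) (h * g')
        have hW₀U : W₀ ≤ U := by
          have : W₀.map (ρ 1) = W₀ := by rw [map_one]; exact Submodule.map_id W₀
          calc W₀ = W₀.map (ρ 1) := this.symm
            _ ≤ U := le_iSup (fun h : P => W₀.map (ρ h)) 1
        have hUne : U ≠ ⊥ := fun h => hbot (le_bot_iff.mp (h ▸ hW₀U))
        have hUtop : U = ⊤ := (hirr U hUinv).resolve_left hUne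
        have hUle : U ≤ W₀ ⊔ Y := by
          rw [hUdef]
          apply iSup_le
          intro g'
          by_cases hgK : cfun g' = 1
          · exact le_sup_of_le_left (hW₀inv g' hgK)
          · refine le_sup_of_le_right ?_
            have h1 : W₀.map (ρ g') ≤ Module.End.eigenspace T (cfun g'⁻¹ * μ₀) :=
              le_trans (Submodule.map_mono hW₀le) (hmap g' μ₀)
            have hne : cfun g'⁻¹ * μ₀ ≠ μ₀ := by
              intro h
              apply hgK
              have h2 : cfun g'⁻¹ = 1 := by
                have := mul_right_cancel₀ hμ₀ne (h.trans (one_mul μ₀).symm)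
                exact this
              have := hcinv g'
              rwa [h2, mul_one] at this
            exact le_trans h1 (le_iSup₂ (f := fun ν (_ : ν ≠ μ₀) => Module.End.eigenspace T ν)
              (cfun g'⁻¹ * μ₀) hne)
        have hdisjWY : Y ⊓ W = ⊥ := by
          have := (Module.End.eigenspaces_iSupIndep T) μ₀
          rw [inf_comm]
          exact this.eq_bot
        have hWeq : W₀ = W := by
          refine le_antisymm hW₀le ?_
          calc W = ⊤ ⊓ W := (top_inf_eq W).symm
            _ = U ⊓ W := by rw [hUtop]
            _ ≤ (W₀ ⊔ Y) ⊓ W := inf_le_inf_right W hUle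
            _ = W₀ ⊔ (Y ⊓ W) := sup_inf_assoc_of_le Y hW₀le
            _ = W₀ ⊔ ⊥ := by rw [hdisjWY]
            _ = W₀ := sup_bot_eq W₀
        have : W₀'.map W.subtype = (⊤ : Submodule ℂ W).map W.subtype := by
          rw [← hW₀def, hWeq, Submodule.map_top, Submodule.range_subtype]
        exact Submodule.map_injective_of_injective W.injective_subtype this
    -- apply the induction hypothesis to `K` acting on `W`
    have hres := IH K (hP.to_subgroup K) W ρW hirrW hWdim
    -- the derived series of `P` eventually lands in `K`
    have hDK : derivedSeries P 1 ≤ K := by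
      rw [derivedSeries_one, commutator_def, Subgroup.commutator_le]
      intro x _ y _
      show cfun (@Bracket.bracket P P commutatorElement x y) = 1
      rw [commutatorElement_def, hcmul, hcmul, hcmul]
      have rearr : ∀ a b c d : ℂ, a * b * c * d = (a * c) * (b * d) := by
        intro a b c d
        ring
      rw [rearr, hcinv x, hcinv y, one_mul]
    have htrans : derivedSeries P (k + 2) ≤ (derivedSeries K (k + 1)).map K.subtype :=
      derivedSeries_le_map_subgroup hDK (k + 1)
    -- elements of `derivedSeries P (k+2)` fix `W` pointwise
    have hfixW : ∀ y ∈ derivedSeries P (k + 2), ∀ w ∈ W, ρ y w = w := by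
      intro y hy w hw
      obtain ⟨n, hn, rfl⟩ := htrans hy
      have h1 : ρW n = 1 := hres n hn
      have h2 : ((ρW n) ⟨w, hw⟩ : V) = ρ (K.subtype n) w := hρWapply n ⟨w, hw⟩
      rw [h1] at h2
      simpa using h2.symm
    -- conclude: `ρ g` is the identity
    have hFinv : ∀ h : P, (⨆ h' : P, W.map (ρ h')).map (ρ h) ≤ ⨆ h' : P, W.map (ρ h') := by
      intro h
      rw [Submodule.map_iSup]
      apply iSup_le
      intro g'
      rw [← Submodule.map_comp]
      have : (ρ h).comp (ρ g') = ρ (h * g') := by rw [map_mul]; rfl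
      rw [this]
      exact le_iSup (fun h : P => W.map (ρ h)) (h * g')
    have hFne : (⨆ h' : P, W.map (ρ h')) ≠ ⊥ := by
      intro h
      apply hWne
      have hWF : W ≤ ⨆ h' : P, W.map (ρ h') := by
        have : W.map (ρ 1) = W := by rw [map_one]; exact Submodule.map_id W
        calc W = W.map (ρ 1) := this.symm
          _ ≤ _ := le_iSup (fun h : P => W.map (ρ h)) 1
      exact le_bot_iff.mp (h ▸ hWF)
    have hFtop : (⨆ h' : P, W.map (ρ h')) = ⊤ := (hirr _ hFinv).resolve_left hFne
    have hker : (⨆ h' : P, W.map (ρ h')) ≤ LinearMap.ker (ρ g - 1) := by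
      apply iSup_le
      intro h
      rintro _ ⟨w, hw, rfl⟩
      rw [LinearMap.mem_ker, LinearMap.sub_apply, Module.End.one_apply, sub_eq_zero]
      have hconj : h⁻¹ * g * h ∈ derivedSeries P (k + 2) := by
        have := (derivedSeries_normal P (k + 2)).conj_mem g hg h⁻¹
        simpa using this
      calc ρ g (ρ h w) = (ρ g * ρ h) w := rfl
        _ = ρ (g * h) w := by rw [← map_mul]
        _ = ρ (h * (h⁻¹ * g * h)) w := by congr 1; group
        _ = (ρ h * ρ (h⁻¹ * g * h)) w := by rw [map_mul]
        _ = ρ h (ρ (h⁻¹ * g * h) w) := rfl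
        _ = ρ h w := by rw [hfixW _ hconj w (by simpa using hw)]
    have : LinearMap.ker (ρ g - 1) = ⊤ := top_unique (hFtop ▸ hker)
    have hzero : ρ g - 1 = 0 := LinearMap.ker_eq_top.mp this
    have := sub_eq_zero.mp hzero
    exact this

end main

section glue

open CategoryTheory

/-- If `P` is a finite `p`-group and `χ` is an irreducible complex character of `P`
with `χ(1) ≤ p ^ n`, then the `(n+1)`-st derived subgroup of `P` is contained in the
kernel of `χ`. -/
theorem derived_le_ker_of_small_degree {p : ℕ} [Fact p.Prime] {P : Type} [Group P]
    [Fintype P] (hP : IsPGroup p P) (V : FDRep ℂ P) [Simple V] (n : ℕ)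
    (hdeg : Module.finrank ℂ V ≤ p ^ n) :
    ∀ g ∈ derivedSeries P (n + 1), V.character g = V.character 1 := by
  classical
  -- the underlying module is nontrivial
  haveI hnontriv : Nontrivial V := by
    by_contra h
    rw [not_nontrivial_iff_subsingleton] at h
    apply CategoryTheory.id_nonzero V
    apply Action.hom_ext
    ext v
    exact Subsingleton.elim _ _ -- might not typecheck; fallback below
  -- irreducibility at the level of submodules
  have hirr : ∀ W : Submodule ℂ V, (∀ g : P, W.map (V.ρ g) ≤ W) → W = ⊥ ∨ W = ⊤ := by
    intro W hWinv
    by_cases hbot : W = ⊥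
    · exact Or.inl hbot
    right
    -- build the subrepresentation and the inclusion morphism
    let ρW : Representation ℂ P W :=
      { toFun := fun g => (V.ρ g).restrict
          (fun w hw => hWinv g (Submodule.mem_map_of_mem hw))
        map_one' := by
          ext w
          simp [LinearMap.restrict_apply]
        map_mul' := by
          intro a c
          ext w
          simp [LinearMap.restrict_apply] }
    let Wrep : FDRep ℂ P := FDRep.of ρW
    let ι : Wrep ⟶ V :=
      { hom := FGModuleCat.ofHom W.subtype
        comm := by
          intro g
          ext w
          rfl }
    haveI : Mono ι := by
      apply ConcreteCategory.mono_of_injective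
      intro a b hab
      exact Subtype.ext hab
    have hιne : ι ≠ 0 := by
      obtain ⟨w, hw, hw0⟩ := Submodule.exists_mem_ne_zero_of_ne_bot hbot
      intro h
      have : ι.hom ⟨w, hw⟩ = (0 : Wrep ⟶ V).hom ⟨w, hw⟩ := by rw [h]
      rw [Action.zero_hom] at this
      exact hw0 this
    haveI : IsIso ι := isIso_of_mono_of_nonzero hιne
    -- surjectivity of the inclusion gives `W = ⊤`
    have hcomp : (inv ι ≫ ι) = 𝟙 V := IsIso.inv_hom_id ι
    rw [Submodule.eq_top_iff']
    intro v
    have h1 : (inv ι ≫ ι).hom v = v := by rw [hcomp]; rfl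
    have h2 : (inv ι ≫ ι).hom v = ι.hom ((inv ι).hom v) := rfl
    rw [h1] at h2
    rw [h2]
    exact ((inv ι).hom v).2
  have := main_induction (p := p) n P hP V V.ρ hirr hdeg
  intro g hg
  have h1 : V.ρ g = 1 := this g hg
  have h2 : V.ρ (1 : P) = 1 := map_one V.ρ
  rw [FDRep.character, FDRep.character, h1, h2]

end glue
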